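/- Lower bound on von Neumann entropy by log-determinant: Let n be a positive integer and ν_1, …, ν_n real numbers with ν_j ≥ 1 for all j, not all equal to 1, and set m = 2·Σ_{j=1}^n log ν_j (so that m = log of the product of the ν_j², the log-determinant of a Gaussian covariance matrix with symplectic spectrum {ν_j}). Then Σ_{j=1}^n h(ν_j) ≥ f_1(m). -/

import Mathlib

/-- The von Neumann entropy contribution of a single symplectic eigenvalue
`ν ≥ 1`: `h(ν) = ((ν+1)/2)·log((ν+1)/2) − ((ν−1)/2)·log((ν−1)/2)` (with
`h(1) = 0`). -/
noncomputable def hEnt (ν : ℝ) : ℝ :=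
  ((ν + 1) / 2) * Real.log ((ν + 1) / 2) - ((ν - 1) / 2) * Real.log ((ν - 1) / 2)

/-- The function `f_n(m)`: tight bound relating von Neumann entropy and
log-determinant of Gaussian states, with `coth t = cosh t / sinh t`. -/
noncomputable def f (n : ℕ) (m : ℝ) : ℝ :=
  ((n : ℝ) / 2) * (Real.log ((Real.exp (m / (n : ℝ)) - 1) / 4)
    + Real.exp (m / (2 * (n : ℝ))) *
        Real.log (Real.cosh (m / (4 * (n : ℝ))) / Real.sinh (m / (4 * (n : ℝ)))))


open Real

noncomputable def Gfun (x : ℝ) : ℝ :=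
  ((Real.exp x + 1) / 2) * Real.log ((Real.exp x + 1) / 2)
    - ((Real.exp x - 1) / 2) * Real.log ((Real.exp x - 1) / 2)

noncomputable def phiFun (x : ℝ) : ℝ :=
  (Real.exp x / 2) * (Real.log (Real.exp x + 1) - Real.log (Real.exp x - 1))

lemma one_lt_exp' {x : ℝ} (hx : 0 < x) : 1 < Real.exp x := by
  calc (1:ℝ) = Real.exp 0 := (Real.exp_zero).symm
  _ < Real.exp x := Real.exp_lt_exp.mpr hx

-- inner inequality via t ∈ [0,1)
lemma log_ratio_le {t : ℝ} (ht0 : 0 ≤ t) (ht1 : t < 1) :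
    Real.log (1 + t) - Real.log (1 - t) ≤ 2 * t / (1 - t ^ 2) := by
  set F : ℝ → ℝ := fun t => 2 * t / (1 - t ^ 2) - (Real.log (1 + t) - Real.log (1 - t)) with hF
  have key : ∀ x ∈ Set.Ioo (0:ℝ) 1, HasDerivAt F (4 * x ^ 2 / (1 - x ^ 2) ^ 2) x := by
    intro x hx
    obtain ⟨hx0, hx1⟩ := hx
    have h1 : (0:ℝ) < 1 + x := by linarith
    have h2 : (0:ℝ) < 1 - x := by linarith
    have hd : (1 - x ^ 2) ≠ 0 := by nlinarith
    have d1 : HasDerivAt (fun t : ℝ => 2 * t / (1 - t ^ 2))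
        ((2 * (1 - x ^ 2) - 2 * x * (-(2 * x))) / (1 - x ^ 2) ^ 2) x := by
      have hnum : HasDerivAt (fun t : ℝ => 2 * t) 2 x := by
        simpa using (hasDerivAt_id x).const_mul (2:ℝ)
      have hden : HasDerivAt (fun t : ℝ => 1 - t ^ 2) (-(2 * x)) x := by
        have := (hasDerivAt_pow 2 x).const_sub (1:ℝ)
        simpa using this
      exact hnum.div hden hd
    have d2 : HasDerivAt (fun t : ℝ => Real.log (1 + t)) (1 / (1 + x)) x := by
      have h := (Real.hasDerivAt_log h1.ne').comp x ((hasDerivAt_id x).const_add (1:ℝ))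
      simpa [Function.comp_def] using h
    have d3 : HasDerivAt (fun t : ℝ => Real.log (1 - t)) (-(1 / (1 - x))) x := by
      have h := (Real.hasDerivAt_log h2.ne').comp x ((hasDerivAt_id x).const_sub (1:ℝ))
      simpa [neg_div, Function.comp_def] using h
    have := d1.sub (d2.sub d3)
    refine this.congr_deriv ?_
    field_simp
    ring
  have hmono : MonotoneOn F (Set.Ico (0:ℝ) 1) := by
    apply monotoneOn_of_deriv_nonneg (convex_Ico 0 1)
    · -- continuity
      have h1 : ∀ x ∈ Set.Ico (0:ℝ) 1, (0:ℝ) < 1 + x := fun x hx => by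
        have := hx.1; linarith
      have h2 : ∀ x ∈ Set.Ico (0:ℝ) 1, (0:ℝ) < 1 - x := fun x hx => by
        have := hx.2; linarith
      apply ContinuousOn.sub
      · apply ContinuousOn.div (by fun_prop) (by fun_prop)
        intro x hx; have := h1 x hx; have := h2 x hx; nlinarith
      · exact ((continuousOn_const.add continuousOn_id).log fun x hx => (h1 x hx).ne').sub
          ((continuousOn_const.sub continuousOn_id).log fun x hx => (h2 x hx).ne')
    · rw [interior_Ico]
      intro x hx
      exact ((key x hx).differentiableAt).differentiableWithinAt
    · rw [interior_Ico]
      intro x hx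
      rw [(key x hx).deriv]
      positivity
  have h0 : F 0 = 0 := by simp [hF]
  have := hmono (Set.mem_Ico.mpr ⟨le_refl 0, one_pos⟩) (Set.mem_Ico.mpr ⟨ht0, ht1⟩) ht0
  rw [h0] at this
  simp only [hF] at this
  linarith

lemma phi_hasDeriv {x : ℝ} (hx : 0 < x) :
    HasDerivAt phiFun
      ((Real.exp x / 2) * (Real.log (Real.exp x + 1) - Real.log (Real.exp x - 1))
        + (Real.exp x / 2) * (Real.exp x / (Real.exp x + 1) - Real.exp x / (Real.exp x - 1))) x := by
  have hE : 1 < Real.exp x := one_lt_exp' hx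
  have h1 : (0:ℝ) < Real.exp x + 1 := by linarith
  have h2 : (0:ℝ) < Real.exp x - 1 := by linarith
  have dA : HasDerivAt (fun t : ℝ => Real.log (Real.exp t + 1)) (Real.exp x / (Real.exp x + 1)) x := by
    have := (Real.hasDerivAt_log h1.ne').comp x ((Real.hasDerivAt_exp x).add_const 1)
    simpa [div_eq_mul_inv, mul_comm, Function.comp_def] using this
  have dB : HasDerivAt (fun t : ℝ => Real.log (Real.exp t - 1)) (Real.exp x / (Real.exp x - 1)) x := by
    have := (Real.hasDerivAt_log h2.ne').comp x ((Real.hasDerivAt_exp x).sub_const 1)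
    simpa [div_eq_mul_inv, mul_comm, Function.comp_def] using this
  have dC : HasDerivAt (fun t : ℝ => Real.exp t / 2) (Real.exp x / 2) x :=
    (Real.hasDerivAt_exp x).div_const 2
  have := dC.mul (dA.sub dB)
  exact this

lemma phi_antitone : AntitoneOn phiFun (Set.Ioi (0:ℝ)) := by
  apply antitoneOn_of_deriv_nonpos (convex_Ioi 0)
  · intro x hx
    exact ((phi_hasDeriv hx).differentiableAt).continuousAt.continuousWithinAt
  · rw [interior_Ioi]
    intro x hx
    exact ((phi_hasDeriv hx).differentiableAt).differentiableWithinAt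
  · rw [interior_Ioi]
    intro x hx
    rw [(phi_hasDeriv hx).deriv]
    have hx' : (0:ℝ) < x := hx
    have hE : 1 < Real.exp x := one_lt_exp' hx'
    have h1 : (0:ℝ) < Real.exp x + 1 := by linarith
    have h2 : (0:ℝ) < Real.exp x - 1 := by linarith
    -- use log_ratio_le with t = exp (-x)
    have ht0 : 0 < Real.exp (-x) := Real.exp_pos _
    have ht1 : Real.exp (-x) < 1 := by
      rw [Real.exp_lt_one_iff]; linarith
    have hkey := log_ratio_le ht0.le ht1
    have e1 : 1 + Real.exp (-x) = (Real.exp x + 1) * Real.exp (-x) := by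
      rw [Real.exp_neg]; field_simp
    have e2 : 1 - Real.exp (-x) = (Real.exp x - 1) * Real.exp (-x) := by
      rw [Real.exp_neg]; field_simp
    have hl1 : Real.log (1 + Real.exp (-x)) = Real.log (Real.exp x + 1) + (-x) := by
      rw [e1, Real.log_mul h1.ne' ht0.ne', Real.log_exp]
    have hl2 : Real.log (1 - Real.exp (-x)) = Real.log (Real.exp x - 1) + (-x) := by
      rw [e2, Real.log_mul h2.ne' ht0.ne', Real.log_exp]
    have hr : 2 * Real.exp (-x) / (1 - Real.exp (-x) ^ 2)
        = 2 * Real.exp x / ((Real.exp x + 1) * (Real.exp x - 1)) := by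
      have hEne : Real.exp x ≠ 0 := (Real.exp_pos x).ne'
      have hd : (0:ℝ) < 1 - Real.exp (-x) ^ 2 := by nlinarith
      have hd2 : (0:ℝ) < (Real.exp x + 1) * (Real.exp x - 1) := by nlinarith
      rw [div_eq_div_iff hd.ne' hd2.ne', Real.exp_neg]
      field_simp
      ring
    rw [hl1, hl2, hr] at hkey
    have hL : Real.log (Real.exp x + 1) - Real.log (Real.exp x - 1)
        ≤ 2 * Real.exp x / ((Real.exp x + 1) * (Real.exp x - 1)) := by linarith
    have hsub : Real.exp x / (Real.exp x + 1) - Real.exp x / (Real.exp x - 1)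
        = -(2 * Real.exp x / ((Real.exp x + 1) * (Real.exp x - 1))) := by
      field_simp
      ring
    rw [hsub]
    have hEpos : (0:ℝ) < Real.exp x / 2 := by positivity
    nlinarith [mul_le_mul_of_nonneg_left hL hEpos.le]

lemma G_hasDeriv {x : ℝ} (hx : 0 < x) : HasDerivAt Gfun (phiFun x) x := by
  have hE : 1 < Real.exp x := one_lt_exp' hx
  have h1 : (0:ℝ) < (Real.exp x + 1) / 2 := by linarith
  have h2 : (0:ℝ) < (Real.exp x - 1) / 2 := by linarith
  have du : HasDerivAt (fun t : ℝ => (Real.exp t + 1) / 2) (Real.exp x / 2) x :=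
    ((Real.hasDerivAt_exp x).add_const 1).div_const 2
  have dv : HasDerivAt (fun t : ℝ => (Real.exp t - 1) / 2) (Real.exp x / 2) x :=
    ((Real.hasDerivAt_exp x).sub_const 1).div_const 2
  have dlu : HasDerivAt (fun t : ℝ => Real.log ((Real.exp t + 1) / 2))
      ((Real.exp x / 2) / ((Real.exp x + 1) / 2)) x := by
    have := (Real.hasDerivAt_log h1.ne').comp x du
    simpa [div_eq_mul_inv, mul_comm, Function.comp_def] using this
  have dlv : HasDerivAt (fun t : ℝ => Real.log ((Real.exp t - 1) / 2))
      ((Real.exp x / 2) / ((Real.exp x - 1) / 2)) x := by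
    have := (Real.hasDerivAt_log h2.ne').comp x dv
    simpa [div_eq_mul_inv, mul_comm, Function.comp_def] using this
  have dU := du.mul dlu
  have dV := dv.mul dlv
  have := dU.sub dV
  refine this.congr_deriv ?_
  beta_reduce
  have hlu : Real.log ((Real.exp x + 1) / 2) = Real.log (Real.exp x + 1) - Real.log 2 :=
    Real.log_div (by linarith) two_ne_zero
  have hlv : Real.log ((Real.exp x - 1) / 2) = Real.log (Real.exp x - 1) - Real.log 2 :=
    Real.log_div (by linarith) two_ne_zero
  rw [phiFun, hlu, hlv]
  field_simp [(show Real.exp x - 1 ≠ 0 by linarith), (show Real.exp x + 1 ≠ 0 by linarith)]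
  ring

lemma G_continuous : Continuous Gfun := by
  have h : Continuous fun y : ℝ => y * Real.log y := Real.continuous_mul_log
  exact (h.comp (by fun_prop : Continuous fun x : ℝ => (Real.exp x + 1) / 2)).sub
    (h.comp (by fun_prop : Continuous fun x : ℝ => (Real.exp x - 1) / 2))

lemma G_zero : Gfun 0 = 0 := by
  simp [Gfun, Real.exp_zero]

lemma G_subadd {x y : ℝ} (hx : 0 ≤ x) (hy : 0 ≤ y) : Gfun (x + y) ≤ Gfun x + Gfun y := by
  rcases eq_or_lt_of_le hy with h | hy0
  · rw [← h, add_zero, G_zero, add_zero]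
  set D : ℝ → ℝ := fun t => Gfun t + Gfun y - Gfun (t + y) with hD
  have key : ∀ t ∈ Set.Ioi (0:ℝ), HasDerivAt D (phiFun t - phiFun (t + y)) t := by
    intro t ht
    have ht' : (0:ℝ) < t := ht
    have d1 := G_hasDeriv ht'
    have d2 : HasDerivAt (fun s : ℝ => Gfun (s + y)) (phiFun (t + y)) t := by
      have := (G_hasDeriv (by linarith : (0:ℝ) < t + y)).comp t ((hasDerivAt_id t).add_const y)
      simpa [Function.comp_def] using this
    exact (d1.add_const (Gfun y)).sub d2
  have hmono : MonotoneOn D (Set.Ici (0:ℝ)) := by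
    apply monotoneOn_of_deriv_nonneg (convex_Ici 0)
    · exact ((G_continuous.add continuous_const).sub
        (G_continuous.comp (by fun_prop))).continuousOn
    · rw [interior_Ici]
      intro t ht
      exact ((key t ht).differentiableAt).differentiableWithinAt
    · rw [interior_Ici]
      intro t ht
      rw [(key t ht).deriv]
      have ht' : (0:ℝ) < t := ht
      have := phi_antitone (Set.mem_Ioi.mpr ht') (Set.mem_Ioi.mpr (by linarith : (0:ℝ) < t + y))
        (by linarith : t ≤ t + y)
      linarith
  have h0 : D 0 = 0 := by simp [hD, G_zero]
  have := hmono (Set.mem_Ici.mpr (le_refl 0)) (Set.mem_Ici.mpr hx) hx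
  rw [h0] at this
  simp only [hD] at this
  linarith

lemma G_sum_le {ι : Type*} (s : Finset ι) (x : ι → ℝ) (hx : ∀ i ∈ s, 0 ≤ x i) :
    Gfun (∑ i ∈ s, x i) ≤ ∑ i ∈ s, Gfun (x i) := by
  induction s using Finset.cons_induction with
  | empty => simp [G_zero]
  | cons a s ha ih =>
    rw [Finset.sum_cons, Finset.sum_cons]
    have hs : ∀ i ∈ s, 0 ≤ x i := fun i hi => hx i (Finset.mem_cons.mpr (Or.inr hi))
    have h1 : Gfun (x a + ∑ i ∈ s, x i) ≤ Gfun (x a) + Gfun (∑ i ∈ s, x i) :=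
      G_subadd (hx a (Finset.mem_cons_self a s)) (Finset.sum_nonneg hs)
    have h2 := ih hs
    linarith

lemma f_one_eq_G {s : ℝ} (hs : 0 < s) : f 1 (2 * s) = Gfun s := by
  have hE : 1 < Real.exp s := one_lt_exp' hs
  have h1 : (0:ℝ) < Real.exp s + 1 := by linarith
  have h2 : (0:ℝ) < Real.exp s - 1 := by linarith
  have hu : (0:ℝ) < (Real.exp s + 1) / 2 := by linarith
  have hv : (0:ℝ) < (Real.exp s - 1) / 2 := by linarith
  have harg1 : 2 * s / ((1:ℕ) : ℝ) = 2 * s := by norm_num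
  have harg2 : 2 * s / (2 * ((1:ℕ) : ℝ)) = s := by norm_num
  have harg3 : 2 * s / (4 * ((1:ℕ) : ℝ)) = s / 2 := by push_cast; ring
  rw [f, harg1, harg2, harg3]
  have hcs : Real.cosh (s / 2) / Real.sinh (s / 2) = (Real.exp s + 1) / (Real.exp s - 1) := by
    rw [Real.cosh_eq, Real.sinh_eq]
    have ha : (0:ℝ) < Real.exp (s / 2) := Real.exp_pos _
    have hab : Real.exp (s / 2) * Real.exp (s / 2) = Real.exp s := by
      rw [← Real.exp_add]; ring_nf
    have hba : Real.exp (s / 2) * Real.exp (-(s / 2)) = 1 := by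
      rw [← Real.exp_add]; simp
    have hden : (0:ℝ) < Real.exp (s / 2) - Real.exp (-(s / 2)) := by
      have : Real.exp (-(s / 2)) < Real.exp (s / 2) := Real.exp_lt_exp.mpr (by linarith)
      linarith
    have hbe : Real.exp (-(s / 2)) * Real.exp s = Real.exp (s / 2) := by
      rw [← Real.exp_add]; ring_nf
    rw [div_eq_div_iff (by linarith : ((Real.exp (s / 2) - Real.exp (-(s / 2))) / 2) ≠ 0) h2.ne']
    linear_combination hbe
  have hexp2 : Real.exp (2 * s) - 1 = Real.exp s * Real.exp s - 1 := by
    rw [← Real.exp_add]; ring_nf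
  have hlog1 : Real.log ((Real.exp (2 * s) - 1) / 4)
      = Real.log ((Real.exp s + 1) / 2) + Real.log ((Real.exp s - 1) / 2) := by
    rw [← Real.log_mul hu.ne' hv.ne']
    congr 1
    rw [hexp2]; ring
  have hlog2 : Real.log ((Real.exp s + 1) / (Real.exp s - 1))
      = Real.log ((Real.exp s + 1) / 2) - Real.log ((Real.exp s - 1) / 2) := by
    rw [← Real.log_div hu.ne' hv.ne']
    congr 1
    field_simp
  rw [hcs, hlog1, hlog2, Gfun]
  push_cast
  ring


/-- **Lower bound on the von Neumann entropy by the log-determinant.** For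
symplectic eigenvalues `ν_j ≥ 1`, not all equal to `1`, with
`m = 2 ∑ j, log ν_j`, one has `∑ j, h(ν_j) ≥ f_1(m)`. -/
theorem vonNeumann_entropy_ge_f_one (n : ℕ) (hn : 0 < n) (ν : Fin n → ℝ)
    (hν : ∀ j, 1 ≤ ν j) (hne : ∃ j, ν j ≠ 1) :
    ∑ j, hEnt (ν j) ≥ f 1 (2 * ∑ j, Real.log (ν j)) := by
  have hlog : ∀ j, 0 ≤ Real.log (ν j) := fun j => Real.log_nonneg (hν j)
  have hspos : 0 < ∑ j, Real.log (ν j) := by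
    obtain ⟨j, hj⟩ := hne
    apply Finset.sum_pos' (fun i _ => hlog i)
    exact ⟨j, Finset.mem_univ j, Real.log_pos (lt_of_le_of_ne (hν j) (Ne.symm hj))⟩
  have hEnt_eq : ∀ j, hEnt (ν j) = Gfun (Real.log (ν j)) := by
    intro j
    have : Real.exp (Real.log (ν j)) = ν j := Real.exp_log (by linarith [hν j])
    rw [hEnt, Gfun, this]
  rw [f_one_eq_G hspos]
  calc Gfun (∑ j, Real.log (ν j)) ≤ ∑ j, Gfun (Real.log (ν j)) :=
        G_sum_le Finset.univ _ (fun i _ => hlog i)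
    _ = ∑ j, hEnt (ν j) := by simp_rw [hEnt_eq]
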